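/- Let Σθ < 1/2 with θ_n > 0 decreasing. In the iterative 6-gon von Koch-type construction where each stage-n segment of length R_{n-1} is replaced by six equal segments of length R_n = R_{n-1}/(2 + 4 cos θ_n), every segment of every finite-stage polygonal approximant makes an angle with the x-axis of absolute value at most Σ_n θ_n; consequently each finite-stage polygonal curve is the graph of a function y = y(x) with Lipschitz constant at most tan(Σ_n θ_n), and the uniform limit curve Γ is a Lipschitz graph. -/

import Mathlib

open Real

/-- The six-segment polygonal replacement of the segment from `a` to `b`, with angle `θ`,
through the explicit points of the von Koch-type construction. -/
noncomputable def repl (θ : ℝ) (a b : ℝ × ℝ) : List ((ℝ × ℝ) × (ℝ × ℝ)) :=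
  let x := b.1 - a.1
  let y := b.2 - a.2
  let c := 2 + 4 * Real.cos θ
  let q0 : ℝ × ℝ := a
  let q1 : ℝ × ℝ := (a.1 + x / c, a.2 + y / c)
  let q2 : ℝ × ℝ := (a.1 + ((1 + Real.cos θ) / c) * x - (Real.sin θ / c) * y,
    a.2 + ((1 + Real.cos θ) / c) * y + (Real.sin θ / c) * x)
  let q3 : ℝ × ℝ := (a.1 + x / 2, a.2 + y / 2)
  let q4 : ℝ × ℝ := (a.1 + ((1 + 3 * Real.cos θ) / c) * x + (Real.sin θ / c) * y,
    a.2 + ((1 + 3 * Real.cos θ) / c) * y - (Real.sin θ / c) * x)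
  let q5 : ℝ × ℝ := (a.1 + ((1 + 4 * Real.cos θ) / c) * x, a.2 + ((1 + 4 * Real.cos θ) / c) * y)
  let q6 : ℝ × ℝ := b
  [(q0, q1), (q1, q2), (q2, q3), (q3, q4), (q4, q5), (q5, q6)]

/-- The stage-`n` polygonal approximant of the von Koch-type curve with angles `θ`,
starting from the horizontal unit segment. -/
noncomputable def stage (θ : ℕ → ℝ) : ℕ → List ((ℝ × ℝ) × (ℝ × ℝ))
  | 0 => [(((0 : ℝ), (0 : ℝ)), ((1 : ℝ), (0 : ℝ)))]
  | n + 1 => (stage θ n).flatMap fun s => repl (θ (n + 1)) s.1 s.2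

/-- The stage-`n` polygonal curve, as a subset of the plane. -/
noncomputable def stageSet (θ : ℕ → ℝ) (n : ℕ) : Set (ℝ × ℝ) :=
  {p | ∃ s ∈ stage θ n, p ∈ segment ℝ s.1 s.2}

/-- chain predicate -/
def IsChainTo : (ℝ × ℝ) → List ((ℝ × ℝ) × (ℝ × ℝ)) → (ℝ × ℝ) → Prop
  | a, [], b => a = b
  | a, s :: l, b => s.1 = a ∧ IsChainTo s.2 l b

def chainSet (l : List ((ℝ × ℝ) × (ℝ × ℝ))) : Set (ℝ × ℝ) :=
  {p | ∃ s ∈ l, p ∈ segment ℝ s.1 s.2}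

lemma stageSet_eq (θ : ℕ → ℝ) (n : ℕ) : stageSet θ n = chainSet (stage θ n) := rfl

def SlopeBd (L : ℝ) (l : List ((ℝ × ℝ) × (ℝ × ℝ))) : Prop :=
  ∀ s ∈ l, 0 < s.2.1 - s.1.1 ∧ |s.2.2 - s.1.2| ≤ L * (s.2.1 - s.1.1)

lemma repl_chainTo (θ : ℝ) (a b : ℝ × ℝ) : IsChainTo a (repl θ a b) b := by
  simp [repl, IsChainTo]

lemma isChainTo_append {l₁ l₂ : List ((ℝ × ℝ) × (ℝ × ℝ))} :
    ∀ {a m b : ℝ × ℝ}, IsChainTo a l₁ m → IsChainTo m l₂ b → IsChainTo a (l₁ ++ l₂) b := by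
  induction l₁ with
  | nil => intro a m b h1 h2; cases h1; simpa using h2
  | cons s l ih =>
      intro a m b h1 h2
      exact ⟨h1.1, ih h1.2 h2⟩

lemma isChainTo_flatMap {f : (ℝ × ℝ) × (ℝ × ℝ) → List ((ℝ × ℝ) × (ℝ × ℝ))}
    {l : List ((ℝ × ℝ) × (ℝ × ℝ))} (hf : ∀ s ∈ l, IsChainTo s.1 (f s) s.2) :
    ∀ {a b : ℝ × ℝ}, IsChainTo a l b → IsChainTo a (l.flatMap f) b := by
  induction l with
  | nil => intro a b h; simpa [IsChainTo] using h
  | cons s l ih =>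
      intro a b h
      rw [List.flatMap_cons]
      refine isChainTo_append ?_ (ih (fun t ht => hf t (List.mem_cons_of_mem s ht)) h.2)
      rw [← h.1]
      exact hf s (List.mem_cons_self)

lemma stage_chainTo (θ : ℕ → ℝ) : ∀ n, IsChainTo (0, 0) (stage θ n) (1, 0) := by
  intro n
  induction n with
  | zero => exact ⟨rfl, rfl⟩
  | succ n ih =>
      exact isChainTo_flatMap (fun s _ => repl_chainTo _ s.1 s.2) ih

lemma seg_coords {a b p : ℝ × ℝ} (hp : p ∈ segment ℝ a b) :
    ∃ v : ℝ, 0 ≤ v ∧ v ≤ 1 ∧ p.1 = a.1 + v * (b.1 - a.1) ∧ p.2 = a.2 + v * (b.2 - a.2) := by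
  rw [segment_eq_image'] at hp
  obtain ⟨v, hv, rfl⟩ := hp
  exact ⟨v, hv.1, hv.2, rfl, rfl⟩

lemma seg_two {L : ℝ} (hL : 0 ≤ L) {a b : ℝ × ℝ} (hx : 0 < b.1 - a.1)
    (hy : |b.2 - a.2| ≤ L * (b.1 - a.1)) {p q : ℝ × ℝ}
    (hp : p ∈ segment ℝ a b) (hq : q ∈ segment ℝ a b) :
    a.1 ≤ p.1 ∧ p.1 ≤ b.1 ∧ |p.2 - q.2| ≤ L * |p.1 - q.1| := by
  obtain ⟨u, hu0, hu1, hpu1, hpu2⟩ := seg_coords hp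
  obtain ⟨v, hv0, hv1, hqv1, hqv2⟩ := seg_coords hq
  refine ⟨by nlinarith, by nlinarith, ?_⟩
  have h1 : p.2 - q.2 = (u - v) * (b.2 - a.2) := by rw [hpu2, hqv2]; ring
  have h2 : p.1 - q.1 = (u - v) * (b.1 - a.1) := by rw [hpu1, hqv1]; ring
  rw [h1, h2, abs_mul, abs_mul, abs_of_pos hx]
  calc |u - v| * |b.2 - a.2| ≤ |u - v| * (L * (b.1 - a.1)) :=
        mul_le_mul_of_nonneg_left hy (abs_nonneg _)
    _ = L * (|u - v| * (b.1 - a.1)) := by ring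

lemma seg_ends {L : ℝ} (hL : 0 ≤ L) {a b : ℝ × ℝ} (hx : 0 < b.1 - a.1)
    (hy : |b.2 - a.2| ≤ L * (b.1 - a.1)) {p : ℝ × ℝ} (hp : p ∈ segment ℝ a b) :
    a.1 ≤ p.1 ∧ p.1 ≤ b.1 ∧ |p.2 - a.2| ≤ L * (p.1 - a.1) ∧ |b.2 - p.2| ≤ L * (b.1 - p.1) := by
  obtain ⟨h1, h2, h3⟩ := seg_two hL hx hy hp (left_mem_segment ℝ a b)
  obtain ⟨_, _, h4⟩ := seg_two hL hx hy (right_mem_segment ℝ a b) hp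
  refine ⟨h1, h2, ?_, ?_⟩
  · rwa [abs_of_nonneg (sub_nonneg.2 h1)] at h3
  · rwa [abs_of_nonneg (sub_nonneg.2 h2)] at h4

lemma chain_start {L : ℝ} (hL : 0 ≤ L) :
    ∀ (l : List ((ℝ × ℝ) × (ℝ × ℝ))) (a b : ℝ × ℝ), IsChainTo a l b → SlopeBd L l →
      ∀ p ∈ chainSet l, a.1 ≤ p.1 ∧ |p.2 - a.2| ≤ L * (p.1 - a.1) := by
  intro l
  induction l with
  | nil => intro a b _ _ p hp; exact absurd hp (by simp [chainSet])
  | cons s l ih =>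
      intro a b hc hs p hp
      obtain ⟨t, ht, hpt⟩ := hp
      obtain ⟨hsx, hsy⟩ := hs s (List.mem_cons_self)
      rcases List.mem_cons.1 ht with rfl | ht'
      · obtain ⟨h1, _, h3, _⟩ := seg_ends hL hsx hsy hpt
        rw [hc.1] at h1 h3
        exact ⟨h1, h3⟩
      · have ih' := ih s.2 b hc.2 (fun t' ht'' => hs t' (List.mem_cons_of_mem s ht''))
          p ⟨t, ht', hpt⟩
        obtain ⟨h1, _, _, h4⟩ := seg_ends hL hsx hsy (right_mem_segment ℝ s.1 s.2)
        have h3 : |s.2.2 - s.1.2| ≤ L * (s.2.1 - s.1.1) := hsy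
        rw [hc.1] at h1 h3
        refine ⟨by linarith [ih'.1], ?_⟩
        calc |p.2 - a.2| ≤ |p.2 - s.2.2| + |s.2.2 - a.2| := abs_sub_le _ _ _
          _ ≤ L * (p.1 - s.2.1) + L * (s.2.1 - a.1) := add_le_add ih'.2 h3
          _ = L * (p.1 - a.1) := by ring

lemma chain_end {L : ℝ} (hL : 0 ≤ L) :
    ∀ (l : List ((ℝ × ℝ) × (ℝ × ℝ))) (a b : ℝ × ℝ), IsChainTo a l b → SlopeBd L l →
      ∀ p ∈ chainSet l, p.1 ≤ b.1 ∧ |b.2 - p.2| ≤ L * (b.1 - p.1) := by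
  intro l
  induction l with
  | nil => intro a b _ _ p hp; exact absurd hp (by simp [chainSet])
  | cons s l ih =>
      intro a b hc hs p hp
      obtain ⟨t, ht, hpt⟩ := hp
      obtain ⟨hsx, hsy⟩ := hs s (List.mem_cons_self)
      have hl' : SlopeBd L l := fun t' ht'' => hs t' (List.mem_cons_of_mem s ht'')
      rcases List.mem_cons.1 ht with rfl | ht'
      · obtain ⟨_, h2, _, h4⟩ := seg_ends hL hsx hsy hpt
        cases l with
        | nil => cases hc.2; exact ⟨h2, h4⟩
        | cons u l' =>
            have hu : t.2 ∈ chainSet (u :: l') :=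
              ⟨u, List.mem_cons_self, hc.2.1 ▸ left_mem_segment ℝ u.1 u.2⟩
            have hend := ih t.2 b hc.2 hl' t.2 hu
            refine ⟨by linarith [hend.1], ?_⟩
            calc |b.2 - p.2| ≤ |b.2 - t.2.2| + |t.2.2 - p.2| := abs_sub_le _ _ _
              _ ≤ L * (b.1 - t.2.1) + L * (t.2.1 - p.1) := add_le_add hend.2 h4
              _ = L * (b.1 - p.1) := by ring
      · exact ih s.2 b hc.2 hl' p ⟨t, ht', hpt⟩

lemma chain_two {L : ℝ} (hL : 0 ≤ L) :
    ∀ (l : List ((ℝ × ℝ) × (ℝ × ℝ))) (a b : ℝ × ℝ), IsChainTo a l b → SlopeBd L l →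
      ∀ p ∈ chainSet l, ∀ q ∈ chainSet l, |p.2 - q.2| ≤ L * |p.1 - q.1| := by
  intro l
  induction l with
  | nil => intro a b _ _ p hp; exact absurd hp (by simp [chainSet])
  | cons s l ih =>
      intro a b hc hs p hp q hq
      obtain ⟨hsx, hsy⟩ := hs s (List.mem_cons_self)
      have hl' : SlopeBd L l := fun t' ht'' => hs t' (List.mem_cons_of_mem s ht'')
      have key : ∀ p' q' : ℝ × ℝ, p' ∈ segment ℝ s.1 s.2 → q' ∈ chainSet l →
          |p'.2 - q'.2| ≤ L * |p'.1 - q'.1| := by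
        intro p' q' hp' hq'
        obtain ⟨_, h2, _, h4⟩ := seg_ends hL hsx hsy hp'
        have hst := chain_start hL l s.2 b hc.2 hl' q' hq'
        have habs : |p'.1 - q'.1| = q'.1 - p'.1 := by
          rw [abs_sub_comm, abs_of_nonneg (by linarith [hst.1])]
        rw [habs]
        calc |p'.2 - q'.2| ≤ |p'.2 - s.2.2| + |s.2.2 - q'.2| := abs_sub_le _ _ _
          _ ≤ L * (s.2.1 - p'.1) + L * (q'.1 - s.2.1) := by
              rw [abs_sub_comm p'.2 s.2.2, abs_sub_comm s.2.2 q'.2]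
              exact add_le_add h4 hst.2
          _ = L * (q'.1 - p'.1) := by ring
      obtain ⟨t, ht, hpt⟩ := hp
      obtain ⟨u, hu, hqu⟩ := hq
      rcases List.mem_cons.1 ht with rfl | ht' <;> rcases List.mem_cons.1 hu with h | hu'
      · subst h
        exact (seg_two hL hsx hsy hpt hqu).2.2
      · exact key p q hpt ⟨u, hu', hqu⟩
      · subst h
        rw [abs_sub_comm, abs_sub_comm p.1]
        exact key q p hqu ⟨t, ht', hpt⟩
      · exact ih s.2 b hc.2 hl' p ⟨t, ht', hpt⟩ q ⟨u, hu', hqu⟩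

lemma chain_connected :
    ∀ (l : List ((ℝ × ℝ) × (ℝ × ℝ))) (a b : ℝ × ℝ), l ≠ [] → IsChainTo a l b →
      IsConnected (chainSet l) ∧ a ∈ chainSet l ∧ b ∈ chainSet l := by
  intro l
  induction l with
  | nil => intro a b h; exact absurd rfl h
  | cons s l ih =>
      intro a b _ hc
      cases l with
      | nil =>
          cases hc.2
          have hone : chainSet [s] = segment ℝ s.1 s.2 := by
            ext p; simp [chainSet]
          rw [hone]
          refine ⟨(convex_segment s.1 s.2).isConnected ⟨s.1, left_mem_segment ℝ s.1 s.2⟩, ?_, ?_⟩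
          · rw [← hc.1]; exact left_mem_segment ℝ s.1 s.2
          · exact right_mem_segment ℝ s.1 s.2
      | cons u l' =>
          obtain ⟨hconn, hmem2, hmemb⟩ := ih s.2 b (by simp) hc.2
          have hsplit : chainSet (s :: u :: l') = segment ℝ s.1 s.2 ∪ chainSet (u :: l') := by
            ext p
            simp only [chainSet, Set.mem_setOf_eq, Set.mem_union, List.mem_cons]
            constructor
            · rintro ⟨t, (rfl | ht), hp⟩
              · exact Or.inl hp
              · exact Or.inr ⟨t, ht, hp⟩
            · rintro (hp | ⟨t, ht, hp⟩)
              · exact ⟨s, Or.inl rfl, hp⟩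
              · exact ⟨t, Or.inr ht, hp⟩
          rw [hsplit]
          have hsegconn : IsConnected (segment ℝ s.1 s.2) :=
            (convex_segment s.1 s.2).isConnected ⟨s.1, left_mem_segment ℝ s.1 s.2⟩
          have hinter : (segment ℝ s.1 s.2 ∩ chainSet (u :: l')).Nonempty :=
            ⟨s.2, right_mem_segment ℝ s.1 s.2, hmem2⟩
          refine ⟨IsConnected.union hinter hsegconn hconn, ?_, ?_⟩
          · exact Or.inl (hc.1 ▸ left_mem_segment ℝ s.1 s.2)
          · exact Or.inr hmemb

noncomputable def Rlen (θ : ℕ → ℝ) : ℕ → ℝ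
  | 0 => 1
  | n + 1 => Rlen θ n / (2 + 4 * Real.cos (θ (n + 1)))

lemma stage_form (θ : ℕ → ℝ) (hθ0 : ∀ n, 0 < θ n) (hθ1 : ∀ n, θ n < π / 2) :
    ∀ n, ∀ s ∈ stage θ n, ∃ φ : ℝ, |φ| ≤ ∑ k ∈ Finset.range n, θ (k + 1) ∧
      s.2.1 - s.1.1 = Rlen θ n * Real.cos φ ∧ s.2.2 - s.1.2 = Rlen θ n * Real.sin φ := by
  intro n
  induction n with
  | zero =>
      intro s hs
      simp only [stage, List.mem_singleton] at hs
      subst hs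
      exact ⟨0, by simp, by simp [Rlen], by simp [Rlen]⟩
  | succ n ih =>
      intro s hs
      simp only [stage, List.mem_flatMap] at hs
      obtain ⟨t, ht, hst⟩ := hs
      obtain ⟨φ, hφ, hx, hy⟩ := ih t ht
      have hR : Rlen θ (n + 1) = Rlen θ n / (2 + 4 * Real.cos (θ (n + 1))) := rfl
      have hA : ∑ k ∈ Finset.range (n + 1), θ (k + 1)
          = (∑ k ∈ Finset.range n, θ (k + 1)) + θ (n + 1) := Finset.sum_range_succ _ n
      have hθp : 0 < θ (n + 1) := hθ0 (n + 1)
      have hcpos : 0 < Real.cos (θ (n + 1)) :=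
        Real.cos_pos_of_mem_Ioo ⟨by linarith [Real.pi_pos], hθ1 (n + 1)⟩
      have hc : (2 + 4 * Real.cos (θ (n + 1))) ≠ 0 := by positivity
      have hX : t.2.1 = t.1.1 + Rlen θ n * Real.cos φ := by linarith
      have hY : t.2.2 = t.1.2 + Rlen θ n * Real.sin φ := by linarith
      have hb1 : |φ| ≤ ∑ k ∈ Finset.range (n + 1), θ (k + 1) := by rw [hA]; linarith
      have hb2 : |φ + θ (n + 1)| ≤ ∑ k ∈ Finset.range (n + 1), θ (k + 1) := by
        rw [hA]
        calc |φ + θ (n + 1)| ≤ |φ| + |θ (n + 1)| := abs_add_le _ _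
          _ ≤ _ := by rw [abs_of_pos hθp]; linarith
      have hb3 : |φ - θ (n + 1)| ≤ ∑ k ∈ Finset.range (n + 1), θ (k + 1) := by
        rw [hA]
        calc |φ - θ (n + 1)| ≤ |φ| + |θ (n + 1)| := abs_sub _ _
          _ ≤ _ := by rw [abs_of_pos hθp]; linarith
      simp only [repl, List.mem_cons, List.not_mem_nil, or_false] at hst
      rcases hst with rfl | rfl | rfl | rfl | rfl | rfl
      · exact ⟨φ, hb1, by rw [hR, hX]; field_simp; ring,
          by rw [hR, hY]; field_simp; ring⟩
      · exact ⟨φ + θ (n + 1), hb2,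
          by rw [hR, Real.cos_add, hX, hY]; field_simp; ring,
          by rw [hR, Real.sin_add, hX, hY]; field_simp; ring⟩
      · exact ⟨φ - θ (n + 1), hb3,
          by rw [hR, Real.cos_sub, hX, hY]; field_simp; ring,
          by rw [hR, Real.sin_sub, hX, hY]; field_simp; ring⟩
      · exact ⟨φ - θ (n + 1), hb3,
          by rw [hR, Real.cos_sub, hX, hY]; field_simp; ring,
          by rw [hR, Real.sin_sub, hX, hY]; field_simp; ring⟩
      · exact ⟨φ + θ (n + 1), hb2,
          by rw [hR, Real.cos_add, hX, hY]; field_simp; ring,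
          by rw [hR, Real.sin_add, hX, hY]; field_simp; ring⟩
      · exact ⟨φ, hb1, by rw [hR, hX]; field_simp; ring,
          by rw [hR, hY]; field_simp; ring⟩

lemma stage_slope (θ : ℕ → ℝ) (hpos : ∀ n, 0 < θ n) (hsummable : Summable θ)
    (hsum : (∑' n, θ n) < 1 / 2) :
    ∀ n, ∀ s ∈ stage θ n, 0 < s.2.1 - s.1.1 ∧
      |s.2.2 - s.1.2| ≤ Real.tan (∑' k, θ k) * (s.2.1 - s.1.1) ∧
      s.2.1 - s.1.1 ≤ (1 / 2 : ℝ) ^ n := by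
  have hπ3 := Real.pi_gt_three
  have hθT : ∀ n, θ n ≤ ∑' k, θ k := fun n =>
    Summable.le_tsum hsummable n (fun m _ => (hpos m).le)
  have hθπ : ∀ n, θ n < π / 2 := fun n => by linarith [hθT n]
  have hT0 : 0 ≤ ∑' k, θ k := tsum_nonneg (fun n => (hpos n).le)
  have hTπ : (∑' k, θ k) < π / 2 := by linarith
  have hcT : 0 < Real.cos (∑' k, θ k) :=
    Real.cos_pos_of_mem_Ioo ⟨by linarith, hTπ⟩
  have hA : ∀ n, (∑ k ∈ Finset.range n, θ (k + 1)) ≤ ∑' k, θ k := by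
    intro n
    have h1 : ∑ k ∈ Finset.range (n + 1), θ k
        = (∑ k ∈ Finset.range n, θ (k + 1)) + θ 0 := Finset.sum_range_succ' θ n
    have h2 : ∑ k ∈ Finset.range (n + 1), θ k ≤ ∑' k, θ k :=
      Summable.sum_le_tsum _ (fun i _ => (hpos i).le) hsummable
    linarith [hpos 0]
  have hRb : ∀ n, 0 < Rlen θ n ∧ Rlen θ n ≤ (1 / 2 : ℝ) ^ n := by
    intro n
    induction n with
    | zero => norm_num [Rlen]
    | succ n ih =>
        have hcpos : 0 < Real.cos (θ (n + 1)) :=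
          Real.cos_pos_of_mem_Ioo ⟨by linarith [hpos (n + 1)], hθπ (n + 1)⟩
        have h2 : (2 : ℝ) ≤ 2 + 4 * Real.cos (θ (n + 1)) := by linarith
        have hR : Rlen θ (n + 1) = Rlen θ n / (2 + 4 * Real.cos (θ (n + 1))) := rfl
        constructor
        · rw [hR]; exact div_pos ih.1 (by linarith)
        · rw [hR, pow_succ]
          calc Rlen θ n / (2 + 4 * Real.cos (θ (n + 1))) ≤ Rlen θ n / 2 :=
                div_le_div_of_nonneg_left ih.1.le (by norm_num) h2
            _ ≤ (1 / 2 : ℝ) ^ n / 2 := by linarith [ih.2]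
            _ = (1 / 2 : ℝ) ^ n * (1 / 2) := by ring
  intro n s hs
  obtain ⟨φ, hφ, hx, hy⟩ := stage_form θ hpos hθπ n s hs
  have hφT : |φ| ≤ ∑' k, θ k := le_trans hφ (hA n)
  have hcφ : 0 < Real.cos φ := by
    rw [← Real.cos_abs]
    exact Real.cos_pos_of_mem_Ioo ⟨by linarith [abs_nonneg φ], by linarith⟩
  have hRpos := (hRb n).1
  refine ⟨by rw [hx]; positivity, ?_, ?_⟩
  · -- |Δy| ≤ tan T Δx
    have habs : |Real.sin φ| = Real.sin |φ| := by
      rcases le_or_gt 0 φ with h | h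
      · rw [abs_of_nonneg h, abs_of_nonneg (Real.sin_nonneg_of_nonneg_of_le_pi h (by linarith [le_abs_self φ]))]
      · rw [abs_of_neg h, Real.sin_neg,
          abs_of_nonpos (Real.sin_nonpos_of_nonpos_of_neg_pi_le h.le (by linarith [abs_nonneg φ, abs_of_neg h]))]
    have hs1 : Real.sin |φ| ≤ Real.sin (∑' k, θ k) :=
      Real.strictMonoOn_sin.monotoneOn ⟨by linarith [abs_nonneg φ], by linarith⟩
        ⟨by linarith, hTπ.le⟩ hφT
    have hs2 : Real.cos (∑' k, θ k) ≤ Real.cos φ := by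
      rw [← Real.cos_abs φ]
      exact Real.cos_le_cos_of_nonneg_of_le_pi (abs_nonneg φ) (by linarith) hφT
    have hs0 : 0 ≤ Real.sin |φ| :=
      Real.sin_nonneg_of_nonneg_of_le_pi (abs_nonneg φ) (by linarith)
    have hkey : Real.sin |φ| * Real.cos (∑' k, θ k) ≤ Real.sin (∑' k, θ k) * Real.cos φ :=
      mul_le_mul hs1 hs2 hcT.le (by
        have := Real.sin_nonneg_of_nonneg_of_le_pi hT0 (by linarith); linarith)
    rw [hx, hy, abs_mul, abs_of_pos hRpos, habs, Real.tan_eq_sin_div_cos,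
      div_mul_eq_mul_div, le_div_iff₀ hcT]
    nlinarith [hRpos]
  · rw [hx]
    calc Rlen θ n * Real.cos φ ≤ Rlen θ n * 1 :=
        mul_le_mul_of_nonneg_left (Real.cos_le_one φ) hRpos.le
      _ ≤ (1 / 2 : ℝ) ^ n := by rw [mul_one]; exact (hRb n).2


/-- In the von Koch-type construction with `θ_n` positive, decreasing, `Σ θ_n < 1/2`:
every segment of every finite-stage approximant makes an angle at most `Σ θ_n` with the
`x`-axis (equivalently `|Δy| ≤ tan(Σθ)·Δx` with `Δx > 0`); each stage is the graph of a
`tan(Σθ)`-Lipschitz function on `[0,1]`, and these converge uniformly to a Lipschitz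
graph `Γ`. -/
theorem stmt17 (θ : ℕ → ℝ) (hpos : ∀ n, 0 < θ n) (hanti : Antitone θ)
    (hsummable : Summable θ) (hsum : (∑' n, θ n) < 1 / 2) :
    (∀ n : ℕ, ∀ s ∈ stage θ n,
      0 < s.2.1 - s.1.1 ∧ |s.2.2 - s.1.2| ≤ Real.tan (∑' k, θ k) * (s.2.1 - s.1.1)) ∧
    ∃ F : ℕ → ℝ → ℝ, ∃ f : ℝ → ℝ,
      (∀ n : ℕ,
        LipschitzOnWith (Real.toNNReal (Real.tan (∑' k, θ k))) (F n) (Set.Icc 0 1) ∧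
        stageSet θ n ⊆ {p : ℝ × ℝ | p.2 = F n p.1}) ∧
      LipschitzOnWith (Real.toNNReal (Real.tan (∑' k, θ k))) f (Set.Icc 0 1) ∧
      TendstoUniformlyOn F f Filter.atTop (Set.Icc 0 1) := by
  classical
  have hπ3 := Real.pi_gt_three
  have hslope := stage_slope θ hpos hsummable hsum
  set T := ∑' k, θ k with hTdef
  set L := Real.tan T with hLdef
  have hT0 : 0 ≤ T := tsum_nonneg fun n => (hpos n).le
  have hTπ : T < π / 2 := by
    have : T < 1 / 2 := hsum
    linarith
  have hL0 : 0 ≤ L := by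
    rw [hLdef, Real.tan_eq_sin_div_cos]
    exact div_nonneg (Real.sin_nonneg_of_nonneg_of_le_pi hT0 (by linarith))
      (Real.cos_pos_of_mem_Ioo ⟨by linarith, hTπ⟩).le
  have hK : ((Real.toNNReal L : NNReal) : ℝ) = L := Real.coe_toNNReal L hL0
  have hSB : ∀ n, SlopeBd L (stage θ n) := fun n s hs =>
    ⟨(hslope n s hs).1, (hslope n s hs).2.1⟩
  have hchain := stage_chainTo θ
  refine ⟨fun n s hs => ⟨(hslope n s hs).1, (hslope n s hs).2.1⟩, ?_⟩
  have htwo : ∀ n, ∀ p ∈ stageSet θ n, ∀ q ∈ stageSet θ n,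
      |p.2 - q.2| ≤ L * |p.1 - q.1| :=
    fun n => chain_two hL0 (stage θ n) _ _ (hchain n) (hSB n)
  have hIccX : ∀ n, Set.Icc (0 : ℝ) 1 ⊆ {x | ∃ y, (x, y) ∈ stageSet θ n} := by
    intro n
    have hne : stage θ n ≠ [] := by
      intro h
      have h2 := hchain n
      rw [h] at h2
      have := congrArg Prod.fst h2
      norm_num at this
    obtain ⟨hconn, hmem0, hmem1⟩ := chain_connected (stage θ n) _ _ hne (hchain n)
    have himg : IsConnected (Prod.fst '' chainSet (stage θ n)) :=
      hconn.image _ continuous_fst.continuousOn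
    have h01 : Set.Icc (0 : ℝ) 1 ⊆ Prod.fst '' chainSet (stage θ n) :=
      himg.isPreconnected.Icc_subset ⟨((0 : ℝ), (0 : ℝ)), hmem0, rfl⟩
        ⟨((1 : ℝ), (0 : ℝ)), hmem1, rfl⟩
    intro x hx
    obtain ⟨p, hp, hpx⟩ := h01 hx
    exact ⟨p.2, by rw [← hpx, Prod.mk.eta]; exact hp⟩
  set f0 : ℕ → ℝ → ℝ := fun n x =>
    if h : ∃ y, (x, y) ∈ stageSet θ n then h.choose else 0 with hf0def
  have hf0 : ∀ n x, (∃ y, (x, y) ∈ stageSet θ n) → (x, f0 n x) ∈ stageSet θ n := by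
    intro n x h
    simp only [hf0def, dif_pos h]
    exact h.choose_spec
  have hf0lip : ∀ n, LipschitzOnWith (Real.toNNReal L) (f0 n)
      {x | ∃ y, (x, y) ∈ stageSet θ n} := by
    intro n
    rw [lipschitzOnWith_iff_dist_le_mul]
    intro x hx y hy
    rw [Real.dist_eq, Real.dist_eq, hK]
    have h1 := hf0 n x hx
    have h2 := hf0 n y hy
    have h3 := htwo n (x, f0 n x) h1 (y, f0 n y) h2
    simpa using h3
  have hFex : ∀ n, ∃ g : ℝ → ℝ, LipschitzWith (Real.toNNReal L) g ∧
      Set.EqOn (f0 n) g {x | ∃ y, (x, y) ∈ stageSet θ n} :=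
    fun n => (hf0lip n).extend_real
  choose F hFlip hFeq using hFex
  have hgraph : ∀ n, stageSet θ n ⊆ {p : ℝ × ℝ | p.2 = F n p.1} := by
    intro n p hp
    have hx : ∃ y, (p.1, y) ∈ stageSet θ n := ⟨p.2, by rw [Prod.mk.eta]; exact hp⟩
    have h1 : (p.1, f0 n p.1) ∈ stageSet θ n := hf0 n p.1 hx
    have h2 := htwo n (p.1, f0 n p.1) h1 p hp
    simp only [sub_self, abs_zero, mul_zero] at h2
    have h3 : f0 n p.1 = p.2 := by
      have := abs_nonneg ((p.1, f0 n p.1).2 - p.2)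
      have h4 : |(p.1, f0 n p.1).2 - p.2| = 0 := le_antisymm h2 this
      have := abs_eq_zero.1 h4
      simpa [sub_eq_zero] using this
    show p.2 = F n p.1
    rw [← hFeq n hx, h3]
  have hdiff : ∀ n, ∀ x ∈ Set.Icc (0 : ℝ) 1,
      |F (n + 1) x - F n x| ≤ 2 * L * (1 / 2 : ℝ) ^ n := by
    intro n x hx
    have hxX : ∃ y, (x, y) ∈ stageSet θ (n + 1) := hIccX (n + 1) hx
    have hp : (x, F (n + 1) x) ∈ stageSet θ (n + 1) := by
      rw [← hFeq (n + 1) hxX]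
      exact hf0 (n + 1) x hxX
    obtain ⟨s', hs', hps'⟩ := hp
    have hs'' := hs'
    simp only [stage, List.mem_flatMap] at hs''
    obtain ⟨t, ht, hmem⟩ := hs''
    have hreplSB : SlopeBd L (repl (θ (n + 1)) t.1 t.2) := by
      intro u hu
      refine hSB (n + 1) u ?_
      simp only [stage, List.mem_flatMap]
      exact ⟨t, ht, hu⟩
    have hchainr := repl_chainTo (θ (n + 1)) t.1 t.2
    have hpr : (x, F (n + 1) x) ∈ chainSet (repl (θ (n + 1)) t.1 t.2) :=
      ⟨s', hmem, hps'⟩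
    have h1 := chain_start hL0 _ _ _ hchainr hreplSB _ hpr
    have h2 := chain_end hL0 _ _ _ hchainr hreplSB _ hpr
    simp only at h1 h2
    have htx := hslope n t ht
    have ht1mem : t.1 ∈ stageSet θ n := ⟨t, ht, left_mem_segment ℝ t.1 t.2⟩
    have ha := chain_start hL0 (stage θ n) _ _ (hchain n) (hSB n) t.1 ht1mem
    have hb := chain_end hL0 (stage θ n) _ _ (hchain n) (hSB n) t.1 ht1mem
    have hFt : F n t.1.1 = t.1.2 := (hgraph n ht1mem).symm
    have hFb : |F n x - F n t.1.1| ≤ L * |x - t.1.1| := by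
      have := (hFlip n).dist_le_mul x t.1.1
      rwa [Real.dist_eq, Real.dist_eq, hK] at this
    have hxt : t.1.1 ≤ x := h1.1
    have hxb : x - t.1.1 ≤ (1 / 2 : ℝ) ^ n := by
      have := h2.1
      linarith [htx.2.2]
    have hterm1 : |F (n + 1) x - t.1.2| ≤ L * (1 / 2 : ℝ) ^ n := by
      refine le_trans h1.2 ?_
      exact mul_le_mul_of_nonneg_left hxb hL0
    have hterm2 : |t.1.2 - F n x| ≤ L * (1 / 2 : ℝ) ^ n := by
      rw [← hFt, abs_sub_comm]
      refine le_trans hFb ?_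
      rw [abs_of_nonneg (by linarith)]
      exact mul_le_mul_of_nonneg_left hxb hL0
    calc |F (n + 1) x - F n x| ≤ |F (n + 1) x - t.1.2| + |t.1.2 - F n x| :=
          abs_sub_le _ _ _
      _ ≤ L * (1 / 2 : ℝ) ^ n + L * (1 / 2 : ℝ) ^ n := add_le_add hterm1 hterm2
      _ = 2 * L * (1 / 2 : ℝ) ^ n := by ring
  have htel : ∀ n k, ∀ x ∈ Set.Icc (0 : ℝ) 1,
      |F (n + k) x - F n x| ≤ 4 * L * ((1 / 2 : ℝ) ^ n - (1 / 2 : ℝ) ^ (n + k)) := by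
    intro n k
    induction k with
    | zero => intro x _; simp
    | succ k ih =>
        intro x hx
        have h1 := ih x hx
        have h2 := hdiff (n + k) x hx
        have hne : n + (k + 1) = (n + k) + 1 := rfl
        calc |F (n + (k + 1)) x - F n x|
            ≤ |F ((n + k) + 1) x - F (n + k) x| + |F (n + k) x - F n x| := by
              rw [hne]; exact abs_sub_le _ _ _
          _ ≤ 2 * L * (1 / 2 : ℝ) ^ (n + k)
              + 4 * L * ((1 / 2 : ℝ) ^ n - (1 / 2 : ℝ) ^ (n + k)) := add_le_add h2 h1
          _ = 4 * L * ((1 / 2 : ℝ) ^ n - (1 / 2 : ℝ) ^ (n + (k + 1))) := by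
              rw [hne, pow_succ]; ring
  have hbound : ∀ n m, n ≤ m → ∀ x ∈ Set.Icc (0 : ℝ) 1,
      |F m x - F n x| ≤ 4 * L * (1 / 2 : ℝ) ^ n := by
    intro n m hnm x hx
    obtain ⟨k, rfl⟩ := Nat.exists_eq_add_of_le hnm
    refine le_trans (htel n k x hx) ?_
    have hq : (0 : ℝ) ≤ (1 / 2 : ℝ) ^ (n + k) := by positivity
    nlinarith
  have hcau : ∀ x ∈ Set.Icc (0 : ℝ) 1, CauchySeq (fun n => F n x) := by
    intro x hx
    apply cauchySeq_of_le_geometric (1 / 2 : ℝ) (2 * L) (by norm_num)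
    intro n
    rw [Real.dist_eq, abs_sub_comm]
    exact hdiff n x hx
  set f : ℝ → ℝ := fun x =>
    if h : ∃ y, Filter.Tendsto (fun n => F n x) Filter.atTop (nhds y) then h.choose
    else 0 with hfdef
  have hft : ∀ x ∈ Set.Icc (0 : ℝ) 1,
      Filter.Tendsto (fun n => F n x) Filter.atTop (nhds (f x)) := by
    intro x hx
    obtain ⟨y, hy⟩ := cauchySeq_tendsto_of_complete (hcau x hx)
    have hex : ∃ y, Filter.Tendsto (fun n => F n x) Filter.atTop (nhds y) := ⟨y, hy⟩
    simp only [hfdef, dif_pos hex]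
    exact hex.choose_spec
  refine ⟨F, f, fun n => ⟨(hFlip n).lipschitzOnWith, hgraph n⟩, ?_, ?_⟩
  · rw [lipschitzOnWith_iff_dist_le_mul]
    intro x hx y hy
    rw [Real.dist_eq, Real.dist_eq, hK]
    have hlim : Filter.Tendsto (fun n => |F n x - F n y|) Filter.atTop
        (nhds (|f x - f y|)) := ((hft x hx).sub (hft y hy)).abs
    refine le_of_tendsto hlim (Filter.Eventually.of_forall fun n => ?_)
    have := (hFlip n).dist_le_mul x y
    rwa [Real.dist_eq, Real.dist_eq, hK] at this
  · rw [Metric.tendstoUniformlyOn_iff]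
    intro ε hε
    have hgeo : Filter.Tendsto (fun n => 4 * L * (1 / 2 : ℝ) ^ n) Filter.atTop
        (nhds 0) := by
      have h := tendsto_pow_atTop_nhds_zero_of_lt_one
        (by norm_num : (0 : ℝ) ≤ 1 / 2) (by norm_num : (1 / 2 : ℝ) < 1)
      simpa using h.const_mul (4 * L)
    filter_upwards [hgeo.eventually_lt_const hε] with n hn
    intro x hx
    rw [Real.dist_eq]
    have hbd : |f x - F n x| ≤ 4 * L * (1 / 2 : ℝ) ^ n := by
      have hlim : Filter.Tendsto (fun m => |F m x - F n x|) Filter.atTop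
          (nhds (|f x - F n x|)) := ((hft x hx).sub tendsto_const_nhds).abs
      refine le_of_tendsto hlim ?_
      filter_upwards [Filter.eventually_ge_atTop n] with m hm
      exact hbound n m hm x hx
    exact lt_of_le_of_lt hbd hn
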